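/- Fix integers a, b, m with 1 ≤ a < b ≤ m and reals x, y ≥ 0. Define p_n(a,b,m;x,y) = Σ x^{ℓ(λ)} y^{ℓ(μ)} over pairs (λ,μ) of a partition λ and a distinct-parts partition μ with |λ|+|μ| = n and ℓ_{a,m}(λ)+ℓ_{a,m}(μ) > ℓ_{b,m}(λ)+ℓ_{b,m}(μ). Then for all n ≥ 0, p_{n+m}(a,b,m;x,y) ≥ p_n(a,b,m;x,y). -/

import Mathlib

/-- The number of parts of the multiset `μ` congruent to `a` modulo `m`. -/
def countRes (m a : ℕ) (μ : Multiset ℕ) : ℕ :=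
  (μ.filter (fun p => p % m = a % m)).card

/-- The residue-weighted biased partition function
`p_n(a,b,m;x,y) = Σ x^{ℓ(λ)} y^{ℓ(μ)}`, summed over pairs `(λ, μ)` of a
partition `λ` and a distinct-parts partition `μ` with `|λ| + |μ| = n` and
`ℓ_{a,m}(λ) + ℓ_{a,m}(μ) > ℓ_{b,m}(λ) + ℓ_{b,m}(μ)`. -/
noncomputable def pw (a b m : ℕ) (x y : ℝ) (n : ℕ) : ℝ :=
  ∑ kl ∈ Finset.HasAntidiagonal.antidiagonal n,
    ∑ p ∈ (Finset.univ : Finset (kl.1.Partition × kl.2.Partition)).filter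
        (fun p => p.2.parts.Nodup ∧
          countRes m b p.1.parts + countRes m b p.2.parts <
            countRes m a p.1.parts + countRes m a p.2.parts),
      x ^ Multiset.card p.1.parts * y ^ Multiset.card p.2.parts



namespace WBM


lemma sup_mem (s : Multiset ℕ) (hs : s ≠ 0) : s.sup ∈ s := by
  induction s using Multiset.induction with
  | empty => simp at hs
  | cons a t ih =>
    rcases eq_or_ne t 0 with rfl | ht
    · simp
    · rw [Multiset.sup_cons]
      rcases le_total a t.sup with h | h
      · rw [sup_eq_right.mpr h]; exact Multiset.mem_cons_of_mem (ih ht)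
      · rw [sup_eq_left.mpr h]; exact Multiset.mem_cons_self a t

def bump (m : ℕ) (s : Multiset ℕ) : Multiset ℕ := (s.sup + m) ::ₘ s.erase s.sup

lemma bump_ne_zero (m : ℕ) (s : Multiset ℕ) : bump m s ≠ 0 := by
  simp [bump]

lemma bump_card (m : ℕ) {s : Multiset ℕ} (hs : s ≠ 0) :
    Multiset.card (bump m s) = Multiset.card s := by
  rw [bump, Multiset.card_cons, Multiset.card_erase_of_mem (sup_mem s hs)]
  exact Nat.succ_pred_eq_of_pos (Multiset.card_pos.mpr hs)

lemma bump_sum (m : ℕ) {s : Multiset ℕ} (hs : s ≠ 0) :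
    (bump m s).sum = s.sum + m := by
  have h := Multiset.cons_erase (sup_mem s hs)
  have hsum : s.sum = s.sup + (s.erase s.sup).sum := by
    conv_lhs => rw [← h]
    rw [Multiset.sum_cons]
  rw [bump, Multiset.sum_cons]
  omega

lemma countRes_cons (m c x : ℕ) (t : Multiset ℕ) :
    countRes m c (x ::ₘ t) = (if x % m = c % m then 1 else 0) + countRes m c t := by
  simp only [countRes, Multiset.filter_cons, Multiset.card_add]
  split <;> simp

lemma countRes_bump (m c : ℕ) {s : Multiset ℕ} (hs : s ≠ 0) :
    countRes m c (bump m s) = countRes m c s := by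
  conv_rhs => rw [← Multiset.cons_erase (sup_mem s hs)]
  rw [bump, countRes_cons, countRes_cons, Nat.add_mod_right]

lemma bump_pos' (m : ℕ) (hm : 1 ≤ m) {s : Multiset ℕ} (hp : ∀ i ∈ s, 0 < i) :
    ∀ i ∈ bump m s, 0 < i := by
  intro i hi
  rw [bump, Multiset.mem_cons] at hi
  rcases hi with rfl | hi
  · omega
  · exact hp i (Multiset.mem_of_mem_erase hi)

lemma bump_nodup (m : ℕ) (hm : 1 ≤ m) {s : Multiset ℕ} (hs : s.Nodup) :
    (bump m s).Nodup := by
  rw [bump, Multiset.nodup_cons]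
  refine ⟨fun h => ?_, hs.erase _⟩
  have := Multiset.le_sup (Multiset.mem_of_mem_erase h)
  omega

lemma bump_sup (m : ℕ) {s : Multiset ℕ} : (bump m s).sup = s.sup + m := by
  rw [bump, Multiset.sup_cons]
  have : (s.erase s.sup).sup ≤ s.sup :=
    Multiset.sup_le.mpr fun a ha => Multiset.le_sup (Multiset.mem_of_mem_erase ha)
  omega

lemma bump_unbump (m : ℕ) {s : Multiset ℕ} (hs : s ≠ 0) :
    ((bump m s).sup - m) ::ₘ (bump m s).erase (bump m s).sup = s := by
  rw [bump_sup, Nat.add_sub_cancel, bump, Multiset.erase_cons_head]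
  exact Multiset.cons_erase (sup_mem s hs)

lemma bump_injOn (m : ℕ) {s t : Multiset ℕ} (hs : s ≠ 0) (ht : t ≠ 0)
    (h : bump m s = bump m t) : s = t := by
  rw [← bump_unbump m hs, h, bump_unbump m ht]


def Good (a b m n : ℕ) (q : Multiset ℕ × Multiset ℕ) : Prop :=
  (∀ i ∈ q.1, 0 < i) ∧ (∀ i ∈ q.2, 0 < i) ∧ q.2.Nodup ∧
    (countRes m b q.1 + countRes m b q.2 < countRes m a q.1 + countRes m a q.2) ∧
    q.1.sum + q.2.sum = n

lemma good_pair {a b m n : ℕ} {s t : Multiset ℕ} :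
    Good a b m n (s, t) ↔
      ((∀ i ∈ s, 0 < i) ∧ (∀ i ∈ t, 0 < i) ∧ t.Nodup ∧
        (countRes m b s + countRes m b t < countRes m a s + countRes m a t) ∧
        s.sum + t.sum = n) := Iff.rfl

lemma countRes_zero (m c : ℕ) : countRes m c 0 = 0 := by simp [countRes]

def P (a b m n : ℕ) : Finset (Multiset ℕ × Multiset ℕ) :=
  (Finset.HasAntidiagonal.antidiagonal n).biUnion fun kl =>
    Finset.image (fun p : kl.1.Partition × kl.2.Partition => (p.1.parts, p.2.parts))
      (Finset.univ.filter fun p => p.2.parts.Nodup ∧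
        countRes m b p.1.parts + countRes m b p.2.parts <
          countRes m a p.1.parts + countRes m a p.2.parts)

lemma mem_P {a b m n : ℕ} {q : Multiset ℕ × Multiset ℕ} :
    q ∈ P a b m n ↔ Good a b m n q := by
  simp only [P, Finset.mem_biUnion, Finset.mem_image, Finset.mem_filter,
    Finset.HasAntidiagonal.mem_antidiagonal, Finset.mem_univ, true_and]
  constructor
  · rintro ⟨⟨k, l⟩, hkl, ⟨p1, p2⟩, ⟨hnd, hb⟩, hq⟩
    subst hq
    refine ⟨fun i hi => p1.parts_pos hi, fun i hi => p2.parts_pos hi, hnd, hb, ?_⟩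
    simpa [p1.parts_sum, p2.parts_sum] using hkl
  · rintro ⟨h1, h2, hnd, hb, hsum⟩
    exact ⟨(q.1.sum, q.2.sum), hsum,
      (⟨q.1, fun hi => h1 _ hi, rfl⟩, ⟨q.2, fun hi => h2 _ hi, rfl⟩), ⟨hnd, hb⟩, rfl⟩

lemma pw_eq (a b m : ℕ) (x y : ℝ) (n : ℕ) :
    pw a b m x y n = ∑ q ∈ P a b m n, x ^ Multiset.card q.1 * y ^ Multiset.card q.2 := by
  rw [pw, P, Finset.sum_biUnion ?hd]
  · refine Finset.sum_congr rfl fun kl _ => ?_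
    rw [Finset.sum_image ?hi]
    intro p hp q hq h
    have h1 := congrArg Prod.fst h
    have h2 := congrArg Prod.snd h
    exact Prod.ext (Nat.Partition.ext h1) (Nat.Partition.ext h2)
  · intro kl hkl kl' hkl' hne
    simp only [Function.onFun]
    rw [Finset.disjoint_left]
    intro q hq hq'
    rw [Finset.mem_image] at hq hq'
    obtain ⟨p, -, rfl⟩ := hq
    obtain ⟨p', -, hp'⟩ := hq'
    apply hne
    obtain ⟨e1, e2⟩ := Prod.mk.inj hp'
    refine Prod.ext ?_ ?_
    · rw [← p.1.parts_sum, ← e1, p'.1.parts_sum]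
    · rw [← p.2.parts_sum, ← e2, p'.2.parts_sum]

noncomputable def Fmap (m : ℕ) (q : Multiset ℕ × Multiset ℕ) : Multiset ℕ × Multiset ℕ :=
  if q.1 = 0 then (0, bump m q.2) else (bump m q.1, q.2)

lemma good_snd_ne {a b m n : ℕ} {q : Multiset ℕ × Multiset ℕ}
    (hq : Good a b m n q) (h0 : q.1 = 0) : q.2 ≠ 0 := by
  intro h2
  have := hq.2.2.2.1
  rw [h0, h2] at this
  simp [countRes] at this

lemma good_Fmap {a b m n : ℕ} (hm : 1 ≤ m) {q : Multiset ℕ × Multiset ℕ}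
    (hq : Good a b m n q) : Good a b m (n + m) (Fmap m q) := by
  obtain ⟨h1, h2, hnd, hb, hsum⟩ := hq
  by_cases h0 : q.1 = 0
  · have h2ne : q.2 ≠ 0 := good_snd_ne ⟨h1, h2, hnd, hb, hsum⟩ h0
    rw [Fmap, if_pos h0, good_pair]
    rw [h0] at hb hsum
    rw [countRes_zero, countRes_zero, zero_add, zero_add] at hb
    rw [Multiset.sum_zero, zero_add] at hsum
    refine ⟨by simp, bump_pos' m hm h2, bump_nodup m hm hnd, ?_, ?_⟩
    · rw [countRes_zero, countRes_zero, zero_add, zero_add,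
        countRes_bump m _ h2ne, countRes_bump m _ h2ne]
      exact hb
    · rw [Multiset.sum_zero, zero_add, bump_sum m h2ne, hsum]
  · rw [Fmap, if_neg h0, good_pair]
    refine ⟨bump_pos' m hm h1, h2, hnd, ?_, ?_⟩
    · rw [countRes_bump m _ h0, countRes_bump m _ h0]
      exact hb
    · rw [bump_sum m h0]
      omega

lemma Fmap_inj {a b m n : ℕ} {q r : Multiset ℕ × Multiset ℕ}
    (hq : Good a b m n q) (hr : Good a b m n r) (h : Fmap m q = Fmap m r) : q = r := by
  by_cases h0 : q.1 = 0 <;> by_cases h0' : r.1 = 0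
  · rw [Fmap, Fmap, if_pos h0, if_pos h0'] at h
    have := bump_injOn m (good_snd_ne hq h0) (good_snd_ne hr h0')
      (congrArg Prod.snd h : bump m q.2 = bump m r.2)
    exact Prod.ext (h0.trans h0'.symm) this
  · rw [Fmap, Fmap, if_pos h0, if_neg h0'] at h
    exact absurd ((congrArg Prod.fst h).symm : bump m r.1 = 0) (bump_ne_zero m r.1)
  · rw [Fmap, Fmap, if_neg h0, if_pos h0'] at h
    exact absurd ((congrArg Prod.fst h) : bump m q.1 = 0) (bump_ne_zero m q.1)
  · rw [Fmap, Fmap, if_neg h0, if_neg h0'] at h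
    have h1 := congrArg Prod.fst h
    have h2 := congrArg Prod.snd h
    exact Prod.ext (bump_injOn m h0 h0' h1) h2

end WBM

set_option maxHeartbeats 1000000 in
/-- For `1 ≤ a < b ≤ m`, `x, y ≥ 0` and all `n ≥ 0`,
`p_{n+m}(a,b,m;x,y) ≥ p_n(a,b,m;x,y)`. -/
theorem weighted_bias_monotone (a b m : ℕ) (ha : 1 ≤ a) (hab : a < b)
    (hbm : b ≤ m) (x y : ℝ) (hx : 0 ≤ x) (hy : 0 ≤ y) (n : ℕ) :
    pw a b m x y n ≤ pw a b m x y (n + m) := by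
  have hm : 1 ≤ m := by omega
  rw [WBM.pw_eq, WBM.pw_eq]
  have key : ∀ q ∈ WBM.P a b m n,
      x ^ Multiset.card q.1 * y ^ Multiset.card q.2 =
      x ^ Multiset.card (WBM.Fmap m q).1 * y ^ Multiset.card (WBM.Fmap m q).2 := by
    intro q hq
    have hg := WBM.mem_P.mp hq
    by_cases h0 : q.1 = 0
    · simp [WBM.Fmap, h0, WBM.bump_card m (WBM.good_snd_ne hg h0)]
    · simp [WBM.Fmap, h0, WBM.bump_card m h0]
  calc ∑ q ∈ WBM.P a b m n, x ^ Multiset.card q.1 * y ^ Multiset.card q.2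
      = ∑ q ∈ WBM.P a b m n,
          x ^ Multiset.card (WBM.Fmap m q).1 * y ^ Multiset.card (WBM.Fmap m q).2 :=
        Finset.sum_congr rfl key
    _ = ∑ q ∈ (WBM.P a b m n).image (WBM.Fmap m),
          x ^ Multiset.card q.1 * y ^ Multiset.card q.2 :=
        (Finset.sum_image (f := fun q : Multiset ℕ × Multiset ℕ => x ^ Multiset.card q.1 * y ^ Multiset.card q.2) fun p hp q hq h =>
          WBM.Fmap_inj (WBM.mem_P.mp hp) (WBM.mem_P.mp hq) h).symm
    _ ≤ ∑ q ∈ WBM.P a b m (n + m), x ^ Multiset.card q.1 * y ^ Multiset.card q.2 := by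
        apply Finset.sum_le_sum_of_subset_of_nonneg
        · rw [Finset.image_subset_iff]
          intro q hq
          exact WBM.mem_P.mpr (WBM.good_Fmap hm (WBM.mem_P.mp hq))
        · intro i _ _
          exact mul_nonneg (pow_nonneg hx _) (pow_nonneg hy _)
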